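/- Fix L_C > 0, k > 0, 0 < α < 1/2, K ≥ 0 and T ≥ 0. Let κ : Γ_ℂ × ℝ → ℂ satisfy |κ(x,t)| ≤ K e^{−k|Im x|}(1+|x|+|t|)^{−1/2} for all x ∈ Γ_ℂ and t ∈ ℝ. Let τ : ℝ → ℂ be measurable with |τ(t)| ≤ T(1+|t|)^{−(α+1/2)} for all t ∈ ℝ. Then there is a constant K′ > 0, depending only on k, α and K, such that for every x ∈ Γ_ℂ the integral ∫_ℝ κ(x,t) τ(t) dt is absolutely convergent and |∫_ℝ κ(x,t) τ(t) dt| ≤ K′ T e^{−k|Im x|}(1+|x|)^{−α}. -/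

import Mathlib

open MeasureTheory Set

noncomputable section

noncomputable section

/-- The region `Γ_L = {z : Re z < -L, Im z ≤ 0}`. -/
def GammaL (L : ℝ) : Set ℂ := {z | z.re < -L ∧ z.im ≤ 0}

/-- The region `Γ_M = {z : |Re z| ≤ L, Im z = 0}`. -/
def GammaM (L : ℝ) : Set ℂ := {z | |z.re| ≤ L ∧ z.im = 0}

/-- The region `Γ_R = {z : Re z > L, Im z ≥ 0}`. -/
def GammaR (L : ℝ) : Set ℂ := {z | L < z.re ∧ 0 ≤ z.im}

/-- The contour region `Γ_ℂ = Γ_L ∪ Γ_M ∪ Γ_R`. -/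
def GammaC (L : ℝ) : Set ℂ := GammaL L ∪ GammaM L ∪ GammaR L

/-- The weight `e^{β|Im x|} (1+|x|)^α`. -/
def cweight (α β : ℝ) (x : ℂ) : ℝ :=
  Real.exp (β * |x.im|) * (1 + ‖x‖) ^ α

/-- The norm `‖f‖_{α,β} = sup_{x ∈ Γ_ℂ} e^{β|Im x|}(1+|x|)^α |f x|`. -/
def cnorm (L α β : ℝ) (f : ℂ → ℂ) : ℝ :=
  sSup ((fun x => cweight α β x * ‖f x‖) '' GammaC L)

lemma aux_f_integrable (α B : ℝ) (hα0 : 0 < α) (hB : 1 ≤ B) :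
    Integrable (fun t : ℝ => (B + |t|) ^ (-(1/2:ℝ)) * (1 + |t|) ^ (-(α + 1/2))) := by
  have hcont : Continuous fun t : ℝ =>
      (B + |t|) ^ (-(1/2:ℝ)) * (1 + |t|) ^ (-(α + 1/2)) := by
    refine ((continuous_const.add continuous_abs).rpow_const fun t => Or.inl (show B + |t| ≠ 0 from ne_of_gt (by linarith [abs_nonneg t]))).mul
      ((continuous_const.add continuous_abs).rpow_const fun t => Or.inl (show (1:ℝ) + |t| ≠ 0 from ne_of_gt (by linarith [abs_nonneg t])))
  have hg : Integrable (fun t : ℝ => (1 + |t|) ^ (-(1 + α))) := by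
    have h1 : ((Module.finrank ℝ ℝ : ℝ)) < 1 + α := by
      simp [Module.finrank_self]; linarith
    simpa [Real.norm_eq_abs] using integrable_one_add_norm (E := ℝ) (μ := volume) h1
  refine hg.mono' hcont.measurable.aestronglyMeasurable (Filter.Eventually.of_forall fun t => ?_)
  have h1 : (0:ℝ) < 1 + |t| := by positivity
  rw [Real.norm_of_nonneg (by positivity)]
  calc (B + |t|) ^ (-(1/2:ℝ)) * (1 + |t|) ^ (-(α + 1/2))
      ≤ (1 + |t|) ^ (-(1/2:ℝ)) * (1 + |t|) ^ (-(α + 1/2)) := by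
        refine mul_le_mul_of_nonneg_right
          (Real.rpow_le_rpow_of_nonpos h1 (by linarith) (by norm_num))
          (Real.rpow_nonneg (by positivity) _)
    _ = (1 + |t|) ^ (-(1 + α)) := by
        rw [← Real.rpow_add h1]; ring_nf

lemma aux_f_bound (α B : ℝ) (hα0 : 0 < α) (hα : α < 1/2) (hB : 1 ≤ B) :
    ∫ t : ℝ, (B + |t|) ^ (-(1/2:ℝ)) * (1 + |t|) ^ (-(α + 1/2)) ≤
      (2 / (1/2 - α) + 2 / α) * B ^ (-α) := by
  have hB0 : (0:ℝ) < B := by linarith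
  have hint := aux_f_integrable α B hα0 hB
  rw [integral_comp_abs (f := fun s : ℝ => (B + s) ^ (-(1/2:ℝ)) * (1 + s) ^ (-(α + 1/2)))]
  have hIOn : IntegrableOn (fun s : ℝ => (B + s) ^ (-(1/2:ℝ)) * (1 + s) ^ (-(α + 1/2)))
      (Ioi (0:ℝ)) := by
    refine hint.integrableOn.congr_fun (fun s hs => ?_) measurableSet_Ioi
    simp only [abs_of_pos (show (0:ℝ) < s from hs)]
  have hsplit : Ioi (0:ℝ) = Ioc 0 B ∪ Ioi B := (Ioc_union_Ioi_eq_Ioi hB0.le).symm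
  rw [hsplit, setIntegral_union (Ioc_disjoint_Ioi le_rfl) measurableSet_Ioi
    (hIOn.mono_set Ioc_subset_Ioi_self) (hIOn.mono_set (Ioi_subset_Ioi hB0.le))]
  have hp1 : ∫ s in Ioc (0:ℝ) B, (B + s) ^ (-(1/2:ℝ)) * (1 + s) ^ (-(α + 1/2)) ≤
      B ^ (-α) / (1/2 - α) := by
    have hI2 : IntegrableOn (fun s : ℝ => B ^ (-(1/2:ℝ)) * s ^ (-(α + 1/2))) (Ioc 0 B) :=
      ((intervalIntegral.intervalIntegrable_rpow' (by linarith)).const_mul _).1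
    calc ∫ s in Ioc (0:ℝ) B, (B + s) ^ (-(1/2:ℝ)) * (1 + s) ^ (-(α + 1/2))
        ≤ ∫ s in Ioc (0:ℝ) B, B ^ (-(1/2:ℝ)) * s ^ (-(α + 1/2)) := by
          refine setIntegral_mono_on (hIOn.mono_set Ioc_subset_Ioi_self) hI2
            measurableSet_Ioc fun s hs => ?_
          refine mul_le_mul
            (Real.rpow_le_rpow_of_nonpos hB0 (by linarith [hs.1.le]) (by norm_num))
            (Real.rpow_le_rpow_of_nonpos hs.1 (by linarith) (by linarith))
            (Real.rpow_nonneg (by linarith [hs.1.le]) _) (Real.rpow_nonneg hB0.le _)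
      _ = B ^ (-(1/2:ℝ)) * ∫ s in Ioc (0:ℝ) B, s ^ (-(α + 1/2)) := integral_const_mul _ _
      _ = B ^ (-(1/2:ℝ)) *
          ((B ^ (-(α + 1/2) + 1) - (0:ℝ) ^ (-(α + 1/2) + 1)) / (-(α + 1/2) + 1)) := by
          rw [← intervalIntegral.integral_of_le hB0.le,
            integral_rpow (Or.inl (by linarith))]
      _ = B ^ (-α) / (1/2 - α) := by
          rw [Real.zero_rpow (ne_of_gt (by linarith)), sub_zero, ← mul_div_assoc,
            ← Real.rpow_add hB0,
            show -(1/2:ℝ) + (-(α + 1/2) + 1) = -α by ring,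
            show -(α + 1/2) + 1 = 1/2 - α by ring]
  have hp2 : ∫ s in Ioi B, (B + s) ^ (-(1/2:ℝ)) * (1 + s) ^ (-(α + 1/2)) ≤
      B ^ (-α) / α := by
    have hI3 : IntegrableOn (fun s : ℝ => s ^ (-(1 + α))) (Ioi B) :=
      integrableOn_Ioi_rpow_of_lt (by linarith) hB0
    calc ∫ s in Ioi B, (B + s) ^ (-(1/2:ℝ)) * (1 + s) ^ (-(α + 1/2))
        ≤ ∫ s in Ioi B, s ^ (-(1 + α)) := by
          refine setIntegral_mono_on (hIOn.mono_set (Ioi_subset_Ioi hB0.le)) hI3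
            measurableSet_Ioi fun s hs => ?_
          have hs0 : (0:ℝ) < s := lt_trans hB0 hs
          calc (B + s) ^ (-(1/2:ℝ)) * (1 + s) ^ (-(α + 1/2))
              ≤ s ^ (-(1/2:ℝ)) * s ^ (-(α + 1/2)) :=
                mul_le_mul
                  (Real.rpow_le_rpow_of_nonpos hs0 (by linarith) (by norm_num))
                  (Real.rpow_le_rpow_of_nonpos hs0 (by linarith) (by linarith))
                  (Real.rpow_nonneg (by linarith) _) (Real.rpow_nonneg hs0.le _)
            _ = s ^ (-(1 + α)) := by rw [← Real.rpow_add hs0]; ring_nf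
      _ = B ^ (-α) / α := by
          rw [integral_Ioi_rpow_of_lt (by linarith) hB0,
            show -(1 + α) + 1 = -α by ring]
          rw [neg_div, div_neg, neg_neg]
  have hnn : (0:ℝ) ≤ B ^ (-α) := Real.rpow_nonneg hB0.le _
  calc _ ≤ 2 * (B ^ (-α) / (1/2 - α) + B ^ (-α) / α) := by linarith
    _ = (2 / (1/2 - α) + 2 / α) * B ^ (-α) := by ring

/-- Membership in the space `𝒞^{α,β}`: continuous on `Γ_ℂ`, analytic on the interiors
of `Γ_L` and `Γ_R`, and with finite norm `‖f‖_{α,β}` (the weighted values are bounded). -/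
def MemC (L α β : ℝ) (f : ℂ → ℂ) : Prop :=
  ContinuousOn f (GammaC L) ∧
  AnalyticOnNhd ℂ f (interior (GammaL L)) ∧
  AnalyticOnNhd ℂ f (interior (GammaR L)) ∧
  BddAbove ((fun x => cweight α β x * ‖f x‖) '' GammaC L)

/-- Weighted bound for the operator with kernel decaying like
`(1+|x|+|t|)^{-1/2}`: there is `K' > 0` depending only on `k, α, K` such that for any
such kernel and any measurable density `τ` with `|τ(t)| ≤ T (1+|t|)^{-(α+1/2)}`, the
integral converges absolutely and is bounded by `K' T e^{-k|Im x|}(1+|x|)^{-α}`. -/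
theorem statement_6 (k α K : ℝ) (hk : 0 < k)
    (hα0 : 0 < α) (hα : α < 1/2) (hK : 0 ≤ K) :
    ∃ K' > 0, ∀ L : ℝ, 0 < L → ∀ (κ : ℂ → ℝ → ℂ) (τ : ℝ → ℂ) (T : ℝ),
      (∀ x : ℂ, Measurable (κ x)) →
      (∀ x ∈ GammaC L, ∀ t : ℝ,
        ‖κ x t‖ ≤
          K * Real.exp (-k * |x.im|) * (1 + ‖x‖ + |t|) ^ (-(1/2 : ℝ))) →
      Measurable τ →
      (∀ t : ℝ, ‖τ t‖ ≤ T * (1 + |t|) ^ (-(α + 1/2))) →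
      ∀ x ∈ GammaC L,
        Integrable (fun t => κ x t * τ t) volume ∧
        ‖∫ t, κ x t * τ t‖ ≤
          K' * T * Real.exp (-k * |x.im|) * (1 + ‖x‖) ^ (-α) := by
  have hC : 0 < 2 / (1/2 - α) + 2 / α := by
    have h1 : 0 < 2 / (1/2 - α) := div_pos two_pos (by linarith)
    have h2 : 0 < 2 / α := by positivity
    linarith
  set C : ℝ := 2 / (1/2 - α) + 2 / α with hCdef
  refine ⟨K * C + 1, by nlinarith, ?_⟩
  intro L hL κ τ T hκm hκb hτm hτb x hx
  set B : ℝ := 1 + ‖x‖ with hBdef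
  have hB : 1 ≤ B := le_add_of_nonneg_right (norm_nonneg _)
  have hT : 0 ≤ T := by
    have h := (norm_nonneg (τ 0)).trans (hτb 0)
    simpa using h
  set e : ℝ := Real.exp (-k * |x.im|) with hedef
  have he : 0 < e := Real.exp_pos _
  have hbound : ∀ t : ℝ, ‖κ x t * τ t‖ ≤
      (K * e * T) * ((B + |t|) ^ (-(1/2:ℝ)) * (1 + |t|) ^ (-(α + 1/2))) := by
    intro t
    rw [norm_mul]
    have h1 := hκb x hx t
    have h2 := hτb t
    have hadd : (1 : ℝ) + ‖x‖ + |t| = B + |t| := by rw [hBdef]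
    rw [hadd] at h1
    calc ‖κ x t‖ * ‖τ t‖
        ≤ (K * e * (B + |t|) ^ (-(1/2:ℝ))) * (T * (1 + |t|) ^ (-(α + 1/2))) :=
          mul_le_mul h1 h2 (norm_nonneg _) (by positivity)
      _ = (K * e * T) * ((B + |t|) ^ (-(1/2:ℝ)) * (1 + |t|) ^ (-(α + 1/2))) := by ring
  have hmaj : Integrable (fun t : ℝ =>
      (K * e * T) * ((B + |t|) ^ (-(1/2:ℝ)) * (1 + |t|) ^ (-(α + 1/2)))) :=
    (aux_f_integrable α B hα0 hB).const_mul _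
  have hInt : Integrable (fun t => κ x t * τ t) :=
    hmaj.mono' ((hκm x).mul hτm).aestronglyMeasurable
      (Filter.Eventually.of_forall hbound)
  refine ⟨hInt, ?_⟩
  have hBnn : (0:ℝ) ≤ B ^ (-α) := Real.rpow_nonneg (by linarith) _
  calc ‖∫ t, κ x t * τ t‖ = ‖∫ t, κ x t * τ t‖ := rfl
    _ ≤ ∫ t, ‖κ x t * τ t‖ := norm_integral_le_integral_norm _
    _ ≤ ∫ t, (K * e * T) * ((B + |t|) ^ (-(1/2:ℝ)) * (1 + |t|) ^ (-(α + 1/2))) :=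
        integral_mono hInt.norm hmaj hbound
    _ = (K * e * T) * ∫ t, (B + |t|) ^ (-(1/2:ℝ)) * (1 + |t|) ^ (-(α + 1/2)) :=
        integral_const_mul _ _
    _ ≤ (K * e * T) * (C * B ^ (-α)) := by
        refine mul_le_mul_of_nonneg_left ?_ (by positivity)
        rw [hCdef]
        exact aux_f_bound α B hα0 hα hB
    _ ≤ (K * C + 1) * T * e * B ^ (-α) := by nlinarith [mul_nonneg (mul_nonneg hT he.le) hBnn]


end
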